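/- Suppose g ≥ 1 and f_1, …, f_g ∈ Homeo_Z^+(R) are each commutators, i.e., f_i = [~a_i, ~b_i] for some ~a_i, ~b_i ∈ Homeo_Z^+(R). If rot(f_1 ∘ ⋯ ∘ f_g) ≤ -g, then rot(f_i) = -1 for some i. -/

import Mathlib

open CircleDeg1Lift

/-- Translation by `-1` commutes with every `CircleDeg1Lift`. -/
lemma commute_translate_neg_one (f : CircleDeg1Lift) :
    Commute ((translate (Multiplicative.ofAdd (-1 : ℝ)) : CircleDeg1Liftˣ) : CircleDeg1Lift) f := by
  ext x
  show (-1 : ℝ) + f x = f (-1 + x)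
  have := f.map_int_add (-1) x
  push_cast at this
  linarith [this]

/-- Milnor–Wood for a commutator: the translation number of a commutator is ≥ -1. -/
lemma neg_one_le_translationNumber_commutator (a b : CircleDeg1Liftˣ) :
    (-1 : ℝ) ≤ translationNumber ((b⁻¹ * a⁻¹ * b * a : CircleDeg1Liftˣ) : CircleDeg1Lift) := by
  by_contra hlt
  push_neg at hlt
  set c : CircleDeg1Liftˣ := b⁻¹ * a⁻¹ * b * a with hc
  have hlt' : translationNumber (c : CircleDeg1Lift) < ((-1 : ℤ) : ℝ) := by exact_mod_cast hlt
  have hx : ∀ x : ℝ, (c : CircleDeg1Lift) x < x + ((-1 : ℤ) : ℝ) :=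
    CircleDeg1Lift.map_lt_of_translationNumber_lt_int _ hlt'
  set T : CircleDeg1Liftˣ := translate (Multiplicative.ofAdd (-1 : ℝ)) with hT
  -- key pointwise inequality : (b*a) x ≤ (a*b) x - 1
  have key : ∀ x : ℝ, ((b * a : CircleDeg1Liftˣ) : CircleDeg1Lift) x ≤
      ((T * (a * b) : CircleDeg1Liftˣ) : CircleDeg1Lift) x := by
    intro x
    have h1 : ((a * b : CircleDeg1Liftˣ) : CircleDeg1Lift) ((c : CircleDeg1Lift) x) ≤
        ((a * b : CircleDeg1Liftˣ) : CircleDeg1Lift) (x + ((-1 : ℤ) : ℝ)) :=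
      ((a * b : CircleDeg1Liftˣ) : CircleDeg1Lift).monotone (hx x).le
    have h2 : ((a * b : CircleDeg1Liftˣ) : CircleDeg1Lift) ((c : CircleDeg1Lift) x) =
        ((b * a : CircleDeg1Liftˣ) : CircleDeg1Lift) x := by
      have : (a * b) * c = b * a := by rw [hc]; group
      calc ((a * b : CircleDeg1Liftˣ) : CircleDeg1Lift) ((c : CircleDeg1Lift) x)
          = (((a * b) * c : CircleDeg1Liftˣ) : CircleDeg1Lift) x := rfl
        _ = ((b * a : CircleDeg1Liftˣ) : CircleDeg1Lift) x := by rw [this]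
    have h3 : ((a * b : CircleDeg1Liftˣ) : CircleDeg1Lift) (x + ((-1 : ℤ) : ℝ)) =
        ((a * b : CircleDeg1Liftˣ) : CircleDeg1Lift) x + ((-1 : ℤ) : ℝ) :=
      CircleDeg1Lift.map_add_int _ x (-1)
    have h4 : ((T * (a * b) : CircleDeg1Liftˣ) : CircleDeg1Lift) x =
        (-1 : ℝ) + ((a * b : CircleDeg1Liftˣ) : CircleDeg1Lift) x := rfl
    rw [h4]
    rw [h2, h3] at h1
    push_cast at h1 ⊢
    linarith
  have hmono : translationNumber ((b * a : CircleDeg1Liftˣ) : CircleDeg1Lift) ≤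
      translationNumber ((T * (a * b) : CircleDeg1Liftˣ) : CircleDeg1Lift) :=
    CircleDeg1Lift.translationNumber_mono key
  have hT2 : translationNumber ((T * (a * b) : CircleDeg1Liftˣ) : CircleDeg1Lift) =
      (-1 : ℝ) + translationNumber ((a * b : CircleDeg1Liftˣ) : CircleDeg1Lift) := by
    have := CircleDeg1Lift.translationNumber_mul_of_commute
      (commute_translate_neg_one ((a * b : CircleDeg1Liftˣ) : CircleDeg1Lift))
    have e : ((T * (a * b) : CircleDeg1Liftˣ) : CircleDeg1Lift) =
        ((T : CircleDeg1Liftˣ) : CircleDeg1Lift) * ((a * b : CircleDeg1Liftˣ) : CircleDeg1Lift) :=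
      rfl
    rw [e, hT, this, CircleDeg1Lift.translationNumber_translate]
  have hconj : translationNumber ((b * a : CircleDeg1Liftˣ) : CircleDeg1Lift) =
      translationNumber ((a * b : CircleDeg1Liftˣ) : CircleDeg1Lift) := by
    have : (b * a : CircleDeg1Liftˣ) = a⁻¹ * (a * b) * a := by group
    rw [this]
    have := CircleDeg1Lift.translationNumber_conj_eq' a ((a * b : CircleDeg1Liftˣ) : CircleDeg1Lift)
    simpa using this
  rw [hconj, hT2] at hmono
  linarith

/-- Every unit of `CircleDeg1Lift` is continuous. -/
lemma continuous_units (F : CircleDeg1Liftˣ) : Continuous (F : CircleDeg1Lift) := by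
  rw [CircleDeg1Lift.continuous_iff_surjective]
  intro y
  exact ⟨(F⁻¹ : CircleDeg1Liftˣ) y, CircleDeg1Lift.units_apply_inv_apply F y⟩

lemma list_prod_lower (l : List CircleDeg1Liftˣ)
    (hl : ∀ u ∈ l, ∀ x : ℝ, x - 1 < ((u : CircleDeg1Liftˣ) : CircleDeg1Lift) x) :
    ∀ x : ℝ, x - l.length ≤ ((l.prod : CircleDeg1Liftˣ) : CircleDeg1Lift) x := by
  induction l with
  | nil => intro x; simp
  | cons u t ih =>
    intro x
    have ht := ih (fun v hv => hl v (List.mem_cons_of_mem _ hv)) x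
    have hu := (hl u List.mem_cons_self (((t.prod : CircleDeg1Liftˣ) : CircleDeg1Lift) x)).le
    have : ((( u :: t).prod : CircleDeg1Liftˣ) : CircleDeg1Lift) x =
        ((u : CircleDeg1Liftˣ) : CircleDeg1Lift) (((t.prod : CircleDeg1Liftˣ) : CircleDeg1Lift) x) := by
      rw [List.prod_cons]; rfl
    rw [this]
    simp only [List.length_cons]
    push_cast
    linarith

lemma list_prod_lower_strict (l : List CircleDeg1Liftˣ) (hne : l ≠ [])
    (hl : ∀ u ∈ l, ∀ x : ℝ, x - 1 < ((u : CircleDeg1Liftˣ) : CircleDeg1Lift) x) :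
    ∀ x : ℝ, x - l.length < ((l.prod : CircleDeg1Liftˣ) : CircleDeg1Lift) x := by
  obtain ⟨u, t, rfl⟩ := List.exists_cons_of_ne_nil hne
  intro x
  have ht := list_prod_lower t (fun v hv => hl v (List.mem_cons_of_mem _ hv)) x
  have hu := hl u List.mem_cons_self (((t.prod : CircleDeg1Liftˣ) : CircleDeg1Lift) x)
  have : (((u :: t).prod : CircleDeg1Liftˣ) : CircleDeg1Lift) x =
      ((u : CircleDeg1Liftˣ) : CircleDeg1Lift) (((t.prod : CircleDeg1Liftˣ) : CircleDeg1Lift) x) := by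
    rw [List.prod_cons]; rfl
  rw [this]
  simp only [List.length_cons]
  push_cast
  linarith

/-- If each `fᵢ` is a commutator in `Homeo_Z^+(ℝ)` and the translation number of
`f₁ ∘ ⋯ ∘ f_g` is at most `-g`, then some `fᵢ` has translation number exactly `-1`. -/
theorem exists_rot_neg_one (g : ℕ) (hg : 1 ≤ g) (f a b : Fin g → CircleDeg1Liftˣ)
    (hcomm : ∀ i, f i = (b i)⁻¹ * (a i)⁻¹ * (b i) * (a i))
    (h : CircleDeg1Lift.translationNumber (((List.ofFn f).prod : CircleDeg1Liftˣ) : CircleDeg1Lift)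
        ≤ -(g : ℝ)) :
    ∃ i, CircleDeg1Lift.translationNumber ((f i : CircleDeg1Liftˣ) : CircleDeg1Lift) = -1 := by
  by_contra hno
  push_neg at hno
  have hge : ∀ i, (-1 : ℝ) ≤ translationNumber ((f i : CircleDeg1Liftˣ) : CircleDeg1Lift) := by
    intro i; rw [hcomm i]; exact neg_one_le_translationNumber_commutator (a i) (b i)
  have hgt : ∀ i, ((-1 : ℤ) : ℝ) < translationNumber ((f i : CircleDeg1Liftˣ) : CircleDeg1Lift) := by
    intro i
    have := lt_of_le_of_ne (hge i) (Ne.symm (hno i))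
    exact_mod_cast this
  have hpt : ∀ u ∈ List.ofFn f, ∀ x : ℝ, x - 1 < ((u : CircleDeg1Liftˣ) : CircleDeg1Lift) x := by
    intro u hu x
    obtain ⟨i, rfl⟩ := List.mem_ofFn.mp hu
    have := CircleDeg1Lift.lt_map_of_int_lt_translationNumber _ (hgt i) x
    push_cast at this
    linarith
  have hne : List.ofFn f ≠ [] := by
    intro hnil
    have : (List.ofFn f).length = 0 := by rw [hnil]; rfl
    simp at this
    omega
  have hstrict := list_prod_lower_strict (List.ofFn f) hne hpt
  rw [List.length_ofFn] at hstrict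
  have hcont := continuous_units ((List.ofFn f).prod)
  have : -(g : ℝ) < translationNumber (((List.ofFn f).prod : CircleDeg1Liftˣ) : CircleDeg1Lift) := by
    apply CircleDeg1Lift.lt_translationNumber_of_forall_add_lt _ hcont
    intro x
    have := hstrict x
    linarith
  linarith
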